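/- In the multilayer setting with widths n_0, …, n_L and layers h = (h_1, …, h_L), for every i ∈ {1, …, L-1} and every (s*_1, …, s*_i) ∈ 𝒮^{(i)}_h, the number of s_{i+1} ∈ {0,1}^{n_{i+1}} with (s*_1, …, s*_i, s_{i+1}) ∈ 𝒮^{(i+1)}_h is at most Σ_{j=0}^{min(n_0, |s*_1|, …, |s*_i|)} C(n_{i+1}, j). -/

import Mathlib

open Matrix

noncomputable def relu {n n' : ℕ} (W : Matrix (Fin n') (Fin n) ℝ) (b : Fin n' → ℝ)
    (x : Fin n → ℝ) : Fin n' → ℝ :=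
  fun i => max 0 (W i ⬝ᵥ x + b i)

noncomputable def sig {n n' : ℕ} (W : Matrix (Fin n') (Fin n) ℝ) (b : Fin n' → ℝ)
    (x : Fin n → ℝ) : Fin n' → Bool :=
  fun i => decide (0 < W i ⬝ᵥ x + b i)

/-- Forward pass through the first `l` layers: `fwd n W b l = h_l ∘ ⋯ ∘ h_1`. -/
noncomputable def fwd (n : ℕ → ℕ) (W : ∀ l : ℕ, Matrix (Fin (n (l + 1))) (Fin (n l)) ℝ)
    (b : ∀ l : ℕ, Fin (n (l + 1)) → ℝ) : (l : ℕ) → (Fin (n 0) → ℝ) → (Fin (n l) → ℝ)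
  | 0 => fun x => x
  | l + 1 => fun x => relu (W l) (b l) (fwd n W b l x)

/-- Multi signature of length `m`:
`msig n W b m x = (S_{h_1}(x), S_{h_2}(h_1(x)), …, S_{h_m}(h_{m-1}∘⋯∘h_1(x)))`. -/
noncomputable def msig (n : ℕ → ℕ) (W : ∀ l : ℕ, Matrix (Fin (n (l + 1))) (Fin (n l)) ℝ)
    (b : ∀ l : ℕ, Fin (n (l + 1)) → ℝ) (m : ℕ) (x : Fin (n 0) → ℝ) :
    ∀ l : Fin m, Fin (n (l.val + 1)) → Bool :=
  fun l => sig (W l.val) (b l.val) (fwd n W b l.val x)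

/-- Number of active units of a binary vector `s`, i.e. `|s|`. -/
def cnt {k : ℕ} (s : Fin k → Bool) : ℕ := (Finset.univ.filter fun j => s j = true).card

/-- `min(n_0, |s_1|, …, |s_i|)` for a length-`i` multi signature `s`. -/
def minAct (n : ℕ → ℕ) (i : ℕ) (s : ∀ l : Fin i, Fin (n (l.val + 1)) → Bool) : ℕ :=
  Finset.univ.fold min (n 0) (fun l : Fin i => cnt (s l))


set_option maxHeartbeats 1000000
set_option synthInstance.maxHeartbeats 100000

section Aux
open Finset in

lemma sum_choose_pascal (m e : ℕ) :
    ∑ j ∈ Finset.range (e + 2), (m + 1).choose j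
      = ∑ j ∈ Finset.range (e + 2), m.choose j + ∑ j ∈ Finset.range (e + 1), m.choose j := by
  induction e with
  | zero => simp [Finset.sum_range_succ]; omega
  | succ e ih =>
      rw [Finset.sum_range_succ, ih, Finset.sum_range_succ (n := e + 2),
        Finset.sum_range_succ (n := e + 1), Nat.choose_succ_succ (m) (e + 1)]
      ring

lemma patBound : ∀ (m d : ℕ) (E : Type) [AddCommGroup E] [Module ℝ E] [FiniteDimensional ℝ E]
    (g : Fin m → E →ₗ[ℝ] ℝ) (c : Fin m → ℝ), Module.finrank ℝ E ≤ d →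
    (Set.range fun v : E => fun j => decide (0 < g j v + c j)).ncard
      ≤ ∑ j ∈ Finset.range (d + 1), m.choose j := by
  intro m
  induction m with
  | zero =>
      intro d E _ _ _ g c _
      have h1 : (Set.range fun v : E => fun j : Fin 0 => decide (0 < g j v + c j))
          ⊆ {fun j : Fin 0 => true} := by
        rintro t ⟨v, rfl⟩
        simp only [Set.mem_singleton_iff]
        funext j; exact j.elim0
      calc (Set.range fun v : E => fun j : Fin 0 => decide (0 < g j v + c j)).ncard
          ≤ ({fun _ : Fin 0 => true} : Set (Fin 0 → Bool)).ncard :=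
            Set.ncard_le_ncard h1 (Set.toFinite _)
        _ = 1 := Set.ncard_singleton _
        _ ≤ _ := by
            have := Finset.single_le_sum (f := fun j => Nat.choose 0 j)
              (fun i _ => Nat.zero_le _) (Finset.mem_range.2 (Nat.succ_pos d))
            simpa using this
  | succ m IH =>
      intro d E _ _ _ g c hd
      classical
      set M : Fin (m + 1) := Fin.last m with hM
      set pat : E → (Fin (m + 1) → Bool) := fun v => fun j => decide (0 < g j v + c j) with hpat
      set pat' : E → (Fin m → Bool) := fun v => fun j => decide (0 < g j.castSucc v + c j.castSucc)
        with hpat'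
      have hPfin : (Set.range pat).Finite := Set.toFinite _
      have hP'fin : (Set.range pat').Finite := Set.toFinite _
      set Pf : Finset (Fin (m + 1) → Bool) := hPfin.toFinset with hPf
      set r : (Fin (m + 1) → Bool) → (Fin m → Bool) := fun t j => t j.castSucc with hr
      set Qf : Finset (Fin m → Bool) := Pf.image r with hQf
      have hQsub : Qf ⊆ hP'fin.toFinset := by
        intro t' ht'
        obtain ⟨t, htP, rfl⟩ := Finset.mem_image.1 ht'
        obtain ⟨v, rfl⟩ := hPfin.mem_toFinset.1 htP
        exact hP'fin.mem_toFinset.2 ⟨v, rfl⟩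
      have hQcard : Qf.card ≤ (Set.range pat').ncard := by
        rw [Set.ncard_eq_toFinset_card _ hP'fin]
        exact Finset.card_le_card hQsub
      -- every element of Pf is a snoc
      have hsnoc : ∀ t ∈ Pf, t = Fin.snoc (r t) (t M) := by
        intro t _
        funext j
        refine Fin.lastCases ?_ ?_ j
        · rw [Fin.snoc_last]
        · intro j; rw [Fin.snoc_castSucc]
      by_cases hgM : g M = 0
      · -- last coordinate is constant
        have hconst : ∀ t ∈ Pf, t M = decide (0 < c M) := by
          intro t ht
          obtain ⟨v, rfl⟩ := hPfin.mem_toFinset.1 ht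
          simp [pat, hgM]
        have hinj : Set.InjOn r Pf := by
          intro t1 h1 t2 h2 h12
          rw [hsnoc t1 h1, hsnoc t2 h2, hconst t1 h1, hconst t2 h2, h12]
        have : Pf.card = Qf.card := (Finset.card_image_of_injOn hinj).symm
        calc (Set.range pat).ncard = Pf.card := Set.ncard_eq_toFinset_card _ hPfin
          _ = Qf.card := this
          _ ≤ (Set.range pat').ncard := hQcard
          _ ≤ ∑ j ∈ Finset.range (d + 1), m.choose j := IH d E _ _ hd
          _ ≤ ∑ j ∈ Finset.range (d + 1), (m+1).choose j :=
              Finset.sum_le_sum (fun j _ => Nat.choose_le_choose j (Nat.le_succ m))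
      · -- g M ≠ 0
        obtain ⟨w, hw⟩ : ∃ w, g M w ≠ 0 := by
          by_contra h
          push_neg at h
          exact hgM (LinearMap.ext h)
        have hwne : w ≠ 0 := fun h => hw (by simp [h])
        have hnt : Nontrivial E := ⟨w, 0, hwne⟩
        have h1d : 1 ≤ d := le_trans (Module.finrank_pos (R := ℝ) (M := E)) hd
        obtain ⟨e, rfl⟩ : ∃ e, d = e + 1 := ⟨d - 1, by omega⟩
        set v0 : E := (-(c M) / g M w) • w with hv0def
        have hv0 : g M v0 = -(c M) := by
          simp [hv0def, _root_.map_smul, smul_eq_mul]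
          field_simp
        set K : Submodule ℝ E := LinearMap.ker (g M) with hK
        have hKrank : Module.finrank ℝ K ≤ e := by
          have h1 : Module.finrank ℝ (LinearMap.range (g M)) + Module.finrank ℝ K
              = Module.finrank ℝ E := LinearMap.finrank_range_add_finrank_ker (g M)
          have h2 : LinearMap.range (g M) = ⊤ := by
            rw [LinearMap.range_eq_top]
            intro y
            exact ⟨(y / g M w) • w, by simp [_root_.map_smul, smul_eq_mul]; field_simp⟩
          rw [h2, finrank_top] at h1
          rw [Module.finrank_self] at h1
          omega
        set g'' : Fin m → K →ₗ[ℝ] ℝ := fun j => (g j.castSucc).comp K.subtype with hg''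
        set c'' : Fin m → ℝ := fun j => g j.castSucc v0 + c j.castSucc with hc''
        set pat'' : K → (Fin m → Bool) := fun v => fun j => decide (0 < g'' j v + c'' j)
          with hpat''
        have hP''fin : (Set.range pat'').Finite := Set.toFinite _
        set Df : Finset (Fin m → Bool) :=
          Qf.filter (fun t' => Fin.snoc t' true ∈ Pf ∧ Fin.snoc t' false ∈ Pf) with hDf
        -- counting
        have hcount : Pf.card ≤ Qf.card + Df.card := by
          rw [Finset.card_eq_sum_card_image r Pf]
          have hterm : ∀ t' ∈ Qf, (Pf.filter fun t => r t = t').card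
              ≤ 1 + (if (Fin.snoc t' true ∈ Pf ∧ Fin.snoc t' false ∈ Pf) then 1 else 0) := by
            intro t' _
            by_cases hcond : Fin.snoc t' true ∈ Pf ∧ Fin.snoc t' false ∈ Pf
            · rw [if_pos hcond]
              have : (Pf.filter fun t => r t = t') ⊆ {Fin.snoc t' true, Fin.snoc t' false} := by
                intro t ht
                obtain ⟨htP, hrt⟩ := Finset.mem_filter.1 ht
                have := hsnoc t htP
                rw [hrt] at this
                cases htM : t M
                · rw [htM] at this
                  exact Finset.mem_insert.2 (Or.inr (Finset.mem_singleton.2 this))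
                · rw [htM] at this
                  exact Finset.mem_insert.2 (Or.inl this)
              calc (Pf.filter fun t => r t = t').card
                  ≤ ({Fin.snoc t' true, Fin.snoc t' false} : Finset _).card :=
                    Finset.card_le_card this
                _ ≤ 2 := Finset.card_insert_le _ _ |>.trans (by simp)
            · rw [if_neg hcond]
              apply Finset.card_le_one.2
              intro t1 h1 t2 h2
              obtain ⟨h1P, h1r⟩ := Finset.mem_filter.1 h1
              obtain ⟨h2P, h2r⟩ := Finset.mem_filter.1 h2
              have e1 := hsnoc t1 h1P; rw [h1r] at e1
              have e2 := hsnoc t2 h2P; rw [h2r] at e2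
              cases ht1 : t1 M <;> cases ht2 : t2 M
              · rw [ht1] at e1; rw [ht2] at e2; rw [e1, e2]
              · rw [ht1] at e1; rw [ht2] at e2
                exact absurd ⟨e2 ▸ h2P, e1 ▸ h1P⟩ hcond
              · rw [ht1] at e1; rw [ht2] at e2
                exact absurd ⟨e1 ▸ h1P, e2 ▸ h2P⟩ hcond
              · rw [ht1] at e1; rw [ht2] at e2; rw [e1, e2]
          calc ∑ t' ∈ Qf, (Pf.filter fun t => r t = t').card
              ≤ ∑ t' ∈ Qf, (1 + if (Fin.snoc t' true ∈ Pf ∧ Fin.snoc t' false ∈ Pf)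
                  then 1 else 0) := Finset.sum_le_sum hterm
            _ = Qf.card + Df.card := by
                rw [Finset.sum_add_distrib]
                congr 1
                · simp
                · rw [hDf, Finset.card_filter]
        -- doubled patterns realized on the kernel
        have hDsub : Df ⊆ hP''fin.toFinset := by
          intro t' ht'
          obtain ⟨-, hplus, hminus⟩ := Finset.mem_filter.1 ht'
          obtain ⟨vp, hvp⟩ := hPfin.mem_toFinset.1 hplus
          obtain ⟨vm, hvm⟩ := hPfin.mem_toFinset.1 hminus
          have hB : 0 < g M vp + c M := by
            have := congrFun hvp M
            simp only [pat, hM, Fin.snoc_last] at this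
            exact of_decide_eq_true this
          have hA : g M vm + c M ≤ 0 := by
            have := congrFun hvm M
            simp only [pat, hM, Fin.snoc_last] at this
            have := of_decide_eq_false this
            linarith [not_lt.1 this]
          have hden : 0 < (g M vp + c M) - (g M vm + c M) := by linarith
          set θ : ℝ := -(g M vm + c M) / ((g M vp + c M) - (g M vm + c M)) with hθ
          have hθ0 : 0 ≤ θ := div_nonneg (by linarith) hden.le
          have hθ1 : θ ≤ 1 := by rw [hθ, div_le_one hden]; linarith
          have hθc : θ * ((g M vp + c M) - (g M vm + c M)) = -(g M vm + c M) := by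
            rw [hθ]; exact div_mul_cancel₀ _ (ne_of_gt hden)
          set z : E := vm + θ • (vp - vm) with hz
          have h1 : g M z = g M vm + θ * (g M vp - g M vm) := by
            simp [hz, map_add, _root_.map_smul, map_sub, smul_eq_mul]
          have hgz : g M z + c M = 0 := by nlinarith [hθc, h1]
          have hu : z - v0 ∈ K := by
            rw [hK, LinearMap.mem_ker, map_sub, hv0]
            have : g M z = -(c M) := by linarith
            rw [this]; ring
          refine hP''fin.mem_toFinset.2 ⟨⟨z - v0, hu⟩, ?_⟩
          funext j
          have hval : g'' j ⟨z - v0, hu⟩ + c'' j = g j.castSucc z + c j.castSucc := by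
            simp [hg'', hc'', map_sub]
            ring
          have hAj := congrFun hvm j.castSucc
          have hBj := congrFun hvp j.castSucc
          simp only [pat, hM, Fin.snoc_castSucc] at hAj hBj
          have hvalz : g j.castSucc z + c j.castSucc
              = (g j.castSucc vm + c j.castSucc)
                + θ * ((g j.castSucc vp + c j.castSucc) - (g j.castSucc vm + c j.castSucc)) := by
            have h1 : g j.castSucc z
                = g j.castSucc vm + θ * (g j.castSucc vp - g j.castSucc vm) := by
              simp [hz, map_add, _root_.map_smul, map_sub, smul_eq_mul]
            rw [h1]; ring
          show decide (0 < g'' j ⟨z - v0, hu⟩ + c'' j) = t' j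
          rw [hval, hvalz]
          cases ht : t' j
          · rw [ht] at hAj hBj
            have hA' : g j.castSucc vm + c j.castSucc ≤ 0 := by
              have := of_decide_eq_false hAj; linarith [not_lt.1 this]
            have hB' : g j.castSucc vp + c j.castSucc ≤ 0 := by
              have := of_decide_eq_false hBj; linarith [not_lt.1 this]
            apply decide_eq_false
            have p1 : 0 ≤ (1 - θ) * (-(g j.castSucc vm + c j.castSucc)) :=
              mul_nonneg (by linarith) (by linarith)
            have p2 : 0 ≤ θ * (-(g j.castSucc vp + c j.castSucc)) :=
              mul_nonneg hθ0 (by linarith)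
            intro hlt
            nlinarith
          · rw [ht] at hAj hBj
            have hA' : 0 < g j.castSucc vm + c j.castSucc := of_decide_eq_true hAj
            have hB' : 0 < g j.castSucc vp + c j.castSucc := of_decide_eq_true hBj
            apply decide_eq_true
            have hmn : 0 < min (g j.castSucc vm + c j.castSucc) (g j.castSucc vp + c j.castSucc) :=
              lt_min hA' hB'
            have p1 : 0 ≤ (1 - θ) * ((g j.castSucc vm + c j.castSucc)
                - min (g j.castSucc vm + c j.castSucc) (g j.castSucc vp + c j.castSucc)) :=
              mul_nonneg (by linarith) (by linarith [min_le_left (g j.castSucc vm + c j.castSucc) (g j.castSucc vp + c j.castSucc)])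
            have p2 : 0 ≤ θ * ((g j.castSucc vp + c j.castSucc)
                - min (g j.castSucc vm + c j.castSucc) (g j.castSucc vp + c j.castSucc)) :=
              mul_nonneg hθ0 (by linarith [min_le_right (g j.castSucc vm + c j.castSucc) (g j.castSucc vp + c j.castSucc)])
            nlinarith
        have hDcard : Df.card ≤ (Set.range pat'').ncard := by
          rw [Set.ncard_eq_toFinset_card _ hP''fin]
          exact Finset.card_le_card hDsub
        calc (Set.range pat).ncard = Pf.card := Set.ncard_eq_toFinset_card _ hPfin
          _ ≤ Qf.card + Df.card := hcount
          _ ≤ (Set.range pat').ncard + (Set.range pat'').ncard := Nat.add_le_add hQcard hDcard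
          _ ≤ (∑ j ∈ Finset.range (e + 1 + 1), m.choose j)
              + ∑ j ∈ Finset.range (e + 1), m.choose j := by
              have i1 := IH (e+1) E (fun j => g j.castSucc) (fun j => c j.castSucc) hd
              have i2 := IH e K g'' c'' hKrank
              exact Nat.add_le_add i1 i2
          _ = ∑ j ∈ Finset.range (e + 1 + 1), (m+1).choose j := (sum_choose_pascal m e).symm


noncomputable def maskMap {p q : ℕ} (Wk : Matrix (Fin q) (Fin p) ℝ) (σ : Fin q → Bool) :
    (Fin p → ℝ) →ₗ[ℝ] (Fin q → ℝ) where
  toFun v := fun j => if σ j then Wk j ⬝ᵥ v else 0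
  map_add' u v := by funext j; by_cases h : σ j <;> simp [h, dotProduct_add]
  map_smul' a v := by funext j; by_cases h : σ j <;> simp [h, dotProduct_smul, smul_eq_mul]

lemma layer_diff (n : ℕ → ℕ) (W : ∀ l : ℕ, Matrix (Fin (n (l + 1))) (Fin (n l)) ℝ)
    (b : ∀ l : ℕ, Fin (n (l + 1)) → ℝ) (k : ℕ) (σ : Fin (n (k + 1)) → Bool)
    (x y : Fin (n 0) → ℝ)
    (hx : sig (W k) (b k) (fwd n W b k x) = σ) (hy : sig (W k) (b k) (fwd n W b k y) = σ) :
    fwd n W b (k+1) x - fwd n W b (k+1) y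
      = maskMap (W k) σ (fwd n W b k x - fwd n W b k y) := by
  funext j
  have hxj := congrFun hx j
  have hyj := congrFun hy j
  simp only [sig] at hxj hyj
  show fwd n W b (k+1) x j - fwd n W b (k+1) y j = _
  simp only [fwd, relu, maskMap, LinearMap.coe_mk, AddHom.coe_mk, Pi.sub_apply]
  by_cases h : σ j
  · rw [h] at hxj hyj
    have h1 : 0 < W k j ⬝ᵥ fwd n W b k x + b k j := of_decide_eq_true hxj
    have h2 : 0 < W k j ⬝ᵥ fwd n W b k y + b k j := of_decide_eq_true hyj
    rw [if_pos h, max_eq_right h1.le, max_eq_right h2.le, dotProduct_sub]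
    ring
  · have hjf : σ j = false := by simpa using h
    rw [hjf] at hxj hyj
    have h1 : ¬(0 < W k j ⬝ᵥ fwd n W b k x + b k j) := of_decide_eq_false hxj
    have h2 : ¬(0 < W k j ⬝ᵥ fwd n W b k y + b k j) := of_decide_eq_false hyj
    rw [if_neg h, max_eq_left (not_lt.1 h1), max_eq_left (not_lt.1 h2), sub_zero]

lemma layer_support (n : ℕ → ℕ) (W : ∀ l : ℕ, Matrix (Fin (n (l + 1))) (Fin (n l)) ℝ)
    (b : ∀ l : ℕ, Fin (n (l + 1)) → ℝ) (k : ℕ) (σ : Fin (n (k + 1)) → Bool)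
    (x : Fin (n 0) → ℝ) (hx : sig (W k) (b k) (fwd n W b k x) = σ)
    (j : Fin (n (k + 1))) (hj : σ j = false) : fwd n W b (k+1) x j = 0 := by
  have hxj := congrFun hx j
  simp only [sig] at hxj
  rw [hj] at hxj
  have h1 : ¬(0 < W k j ⬝ᵥ fwd n W b k x + b k j) := of_decide_eq_false hxj
  show relu (W k) (b k) (fwd n W b k x) j = 0
  simp only [relu]
  exact max_eq_left (not_lt.1 h1)

end Aux

/-- In the multilayer setting with widths `n 0, …, n L` and layers `h = (h_1, …, h_L)`,
for every `i ∈ {1, …, L-1}` and every attained length-`i` multi signature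
`s* = (s*_1, …, s*_i) ∈ 𝒮^{(i)}_h`, the number of `s_{i+1} ∈ {0,1}^{n_{i+1}}` such that
`(s*_1, …, s*_i, s_{i+1}) ∈ 𝒮^{(i+1)}_h` is at most
`∑_{j=0}^{min(n_0, |s*_1|, …, |s*_i|)} C(n_{i+1}, j)`. -/
theorem stmt8 (L : ℕ) (hL : 0 < L) (n : ℕ → ℕ) (hn : ∀ l, 0 < n l)
    (W : ∀ l : ℕ, Matrix (Fin (n (l + 1))) (Fin (n l)) ℝ)
    (b : ∀ l : ℕ, Fin (n (l + 1)) → ℝ)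
    (i : ℕ) (hi1 : 1 ≤ i) (hi2 : i < L)
    (s : ∀ l : Fin i, Fin (n (l.val + 1)) → Bool)
    (hs : s ∈ Set.range (msig n W b i)) :
    {t : Fin (n (i + 1)) → Bool | ∃ x : Fin (n 0) → ℝ,
        msig n W b i x = s ∧ sig (W i) (b i) (fwd n W b i x) = t}.ncard ≤
      ∑ j ∈ Finset.range (minAct n i s + 1), (n (i + 1)).choose j := by
  classical
  obtain ⟨x0, hx0⟩ := hs
  set R : Set (Fin (n 0) → ℝ) := {x | msig n W b i x = s} with hR
  have hx0R : x0 ∈ R := hx0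
  set D : ∀ k : ℕ, Submodule ℝ (Fin (n k) → ℝ) :=
    fun k => Submodule.span ℝ {v | ∃ x ∈ R, v = fwd n W b k x - fwd n W b k x0} with hD
  -- layer signature fact
  have hsigR : ∀ x ∈ R, ∀ k (hk : k < i),
      sig (W k) (b k) (fwd n W b k x) = s ⟨k, hk⟩ := by
    intro x hx k hk
    exact congrFun hx ⟨k, hk⟩
  -- one step of rank monotonicity
  have hstep : ∀ k, k < i → Module.finrank ℝ (D (k+1)) ≤ Module.finrank ℝ (D k) := by
    intro k hk
    have hmap : D (k+1) ≤ Submodule.map (maskMap (W k) (s ⟨k, hk⟩)) (D k) := by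
      rw [hD, Submodule.span_le]
      rintro v ⟨x, hxR, rfl⟩
      refine ⟨fwd n W b k x - fwd n W b k x0, Submodule.subset_span ⟨x, hxR, rfl⟩, ?_⟩
      exact (layer_diff n W b k (s ⟨k, hk⟩) x x0 (hsigR x hxR k hk) (hsigR x0 hx0R k hk)).symm
    exact le_trans (Submodule.finrank_mono hmap) (Submodule.finrank_map_le _ _)
  -- chain
  have hchain : ∀ k, k ≤ i → Module.finrank ℝ (D i) ≤ Module.finrank ℝ (D k) := by
    have aux : ∀ m, m ≤ i → Module.finrank ℝ (D i) ≤ Module.finrank ℝ (D (i - m)) := by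
      intro m
      induction m with
      | zero => intro _; simp
      | succ m ih =>
          intro hm
          have h1 : i - m = (i - (m + 1)) + 1 := by omega
          have h2 := ih (by omega)
          rw [h1] at h2
          exact le_trans h2 (hstep (i - (m+1)) (by omega))
    intro k hk
    have := aux (i - k) (by omega)
    have hik : i - (i - k) = k := by omega
    rwa [hik] at this
  -- dim bound at layer 0
  have hD0 : Module.finrank ℝ (D 0) ≤ n 0 := by
    have := Submodule.finrank_le (D 0)
    rwa [Module.finrank_fin_fun] at this
  -- dim bound at layer l+1
  have hDl : ∀ l : Fin i, Module.finrank ℝ (D (l.val + 1)) ≤ cnt (s l) := by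
    intro l
    set A : Finset (Fin (n (l.val + 1))) := Finset.univ.filter (fun j => s l j = true) with hA
    have hsub : D (l.val + 1)
        ≤ Submodule.span ℝ ↑(A.image (fun j => Pi.single j (1:ℝ))) := by
      rw [hD, Submodule.span_le]
      rintro v ⟨x, hxR, rfl⟩
      have hz : ∀ j, j ∉ A →
          Pi.single j ((fwd n W b (l.val+1) x - fwd n W b (l.val+1) x0) j)
            = (0 : Fin (n (l.val+1)) → ℝ) := by
        intro j hj
        have hjf : s l j = false := by
          simp only [hA, Finset.mem_filter, Finset.mem_univ, true_and] at hj
          simpa using hj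
        have e1 := layer_support n W b l.val (s l) x (hsigR x hxR l.val l.isLt) j hjf
        have e2 := layer_support n W b l.val (s l) x0 (hsigR x0 hx0R l.val l.isLt) j hjf
        simp only [Pi.sub_apply]
        rw [e1, e2, sub_zero]
        exact Pi.single_zero j
      have hrepr : fwd n W b (l.val+1) x - fwd n W b (l.val+1) x0
          = ∑ j ∈ A, Pi.single j ((fwd n W b (l.val+1) x - fwd n W b (l.val+1) x0) j) := by
        rw [Finset.sum_subset (Finset.subset_univ A) (fun j _ hj => hz j hj)]
        exact (Finset.univ_sum_single _).symm
      rw [SetLike.mem_coe, hrepr]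
      refine Submodule.sum_mem _ (fun j hj => ?_)
      have h1 : Pi.single j ((fwd n W b (l.val+1) x - fwd n W b (l.val+1) x0) j)
          = ((fwd n W b (l.val+1) x - fwd n W b (l.val+1) x0) j)
            • (Pi.single j (1:ℝ) : Fin (n (l.val+1)) → ℝ) := by
        funext j'
        by_cases hjj : j' = j
        · subst hjj; simp
        · simp [Pi.single_eq_of_ne hjj]
      rw [h1]
      exact Submodule.smul_mem _ _ (Submodule.subset_span
        (Finset.mem_coe.2 (Finset.mem_image_of_mem _ hj)))
    have hcard := finrank_span_finset_le_card (R := ℝ)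
      (A.image (fun j => Pi.single j (1:ℝ)))
    rw [Set.finrank] at hcard
    exact le_trans (Submodule.finrank_mono hsub)
      (le_trans hcard (le_trans Finset.card_image_le (le_of_eq rfl)))
  have hfin : Module.finrank ℝ (D i) ≤ minAct n i s := by
    rw [minAct]
    rw [Finset.le_fold_min]
    exact ⟨le_trans (hchain 0 (Nat.zero_le i)) hD0,
      fun l _ => le_trans (hchain (l.val + 1) l.isLt) (hDl l)⟩
  -- apply the core bound
  set g : Fin (n (i+1)) → (D i) →ₗ[ℝ] ℝ := fun j =>
    { toFun := fun v => W i j ⬝ᵥ (v : Fin (n i) → ℝ)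
      map_add' := fun u v => by simp [dotProduct_add]
      map_smul' := fun a v => by simp [dotProduct_smul, smul_eq_mul] } with hg
  set c : Fin (n (i+1)) → ℝ := fun j => W i j ⬝ᵥ fwd n W b i x0 + b i j with hc
  have hTsub : {t : Fin (n (i + 1)) → Bool | ∃ x : Fin (n 0) → ℝ,
        msig n W b i x = s ∧ sig (W i) (b i) (fwd n W b i x) = t}
      ⊆ Set.range fun v : (D i) => fun j => decide (0 < g j v + c j) := by
    rintro t ⟨x, hxs, hxt⟩
    have hvmem : fwd n W b i x - fwd n W b i x0 ∈ D i :=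
      Submodule.subset_span ⟨x, hxs, rfl⟩
    refine ⟨⟨fwd n W b i x - fwd n W b i x0, hvmem⟩, ?_⟩
    funext j
    have hval : g j ⟨fwd n W b i x - fwd n W b i x0, hvmem⟩ + c j
        = W i j ⬝ᵥ fwd n W b i x + b i j := by
      simp [hg, hc, dotProduct_sub]
      ring
    show decide (0 < g j ⟨fwd n W b i x - fwd n W b i x0, hvmem⟩ + c j) = t j
    rw [hval]
    exact congrFun hxt j
  calc {t : Fin (n (i + 1)) → Bool | ∃ x : Fin (n 0) → ℝ,
        msig n W b i x = s ∧ sig (W i) (b i) (fwd n W b i x) = t}.ncard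
      ≤ (Set.range fun v : (D i) => fun j => decide (0 < g j v + c j)).ncard :=
        Set.ncard_le_ncard hTsub (Set.toFinite _)
    _ ≤ ∑ j ∈ Finset.range (minAct n i s + 1), (n (i + 1)).choose j :=
        patBound (n (i+1)) (minAct n i s) (D i) g c hfin
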